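/- Let Q be a prime power with Q ≡ 5 (mod 6), and α ∈ F_{Q^2}^*. Then x^(Q+2) + α·x permutes F_{Q^2} if and only if α^(Q−1) has multiplicative order 6. -/

import Mathlib

private lemma aux_basic {Q : ℕ} {F : Type*} [Field F] [Fintype F]
    (hF : Fintype.card F = Q ^ 2) (hQ : Q % 6 = 5) :
    (∀ x y : F, (x + y) ^ Q = x ^ Q + y ^ Q) ∧ (2:F) ≠ 0 ∧ (3:F) ≠ 0 := by
  obtain ⟨p, hp⟩ := CharP.exists F
  haveI := hp
  haveI : Fact p.Prime := ⟨CharP.char_is_prime F p⟩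
  obtain ⟨n, hpp, hcard⟩ := FiniteField.card F p
  have hQdvd : Q ∣ p ^ (n:ℕ) := by
    rw [← hcard, hF]; exact dvd_pow_self Q (by norm_num)
  obtain ⟨m, hmn, hQm⟩ := (Nat.dvd_prime_pow hpp).mp hQdvd
  have hm1 : 1 ≤ m := by
    rcases Nat.eq_zero_or_pos m with h | h
    · subst h; simp at hQm; omega
    · exact h
  have hpQ : p ∣ Q := hQm ▸ dvd_pow_self p (by omega)
  refine ⟨fun x y => by rw [hQm]; exact add_pow_char_pow x y p m, ?_, ?_⟩
  · intro h
    have h2 : p ∣ 2 := (CharP.cast_eq_zero_iff F p 2).mp (by exact_mod_cast h)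
    have := (Nat.prime_dvd_prime_iff_eq hpp Nat.prime_two).mp h2
    subst this; omega
  · intro h
    have h3 : p ∣ 3 := (CharP.cast_eq_zero_iff F p 3).mp (by exact_mod_cast h)
    have := (Nat.prime_dvd_prime_iff_eq hpp Nat.prime_three).mp h3
    subst this; omega

private lemma aux_sq1 (Q : ℕ) (hQ : Q % 6 = 5) : 1 ≤ Q^2 := by
  exact Nat.one_le_pow 2 Q (by omega)

private lemma aux_nd1 (Q : ℕ) (hQ : Q % 6 = 5) : ¬ (Q^2 - 1 ∣ (Q-1)) := fun h => by
  have h1 := Nat.le_of_dvd (by omega) h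
  zify [aux_sq1 Q hQ, show 1 ≤ Q by omega] at h1
  have h5 : (5:ℤ) ≤ (Q:ℤ) := by exact_mod_cast (by omega : 5 ≤ Q)
  nlinarith

private lemma aux_nd2 (Q : ℕ) (hQ : Q % 6 = 5) : ¬ (Q^2 - 1 ∣ 2*(Q-1)) := fun h => by
  have h1 := Nat.le_of_dvd (by omega) h
  zify [aux_sq1 Q hQ, show 1 ≤ Q by omega] at h1
  have h5 : (5:ℤ) ≤ (Q:ℤ) := by exact_mod_cast (by omega : 5 ≤ Q)
  nlinarith

private lemma aux_mul (Q : ℕ) (hQ : Q % 6 = 5) : (Q-1)*(Q+1) = Q^2 - 1 := by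
  zify [aux_sq1 Q hQ, show 1 ≤ Q by omega]
  ring

private lemma aux_gen' {Q : ℕ} {F : Type*} [Field F] [Fintype F]
    (hF : Fintype.card F = Q ^ 2) :
    ∃ g : Fˣ, orderOf g = Q ^ 2 - 1 ∧ ∀ x : Fˣ, x ∈ Subgroup.zpowers g := by
  haveI : DecidableEq F := Classical.decEq F
  obtain ⟨g, hg⟩ := IsCyclic.exists_generator (α := Fˣ)
  refine ⟨g, ?_, hg⟩
  rw [orderOf_eq_card_of_forall_mem_zpowers hg, Nat.card_eq_fintype_card, Fintype.card_units, hF]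

private lemma aux_sq1' (Q : ℕ) (hQ : Q % 6 = 5) : 1 ≤ Q^2 :=
  Nat.one_le_pow 2 Q (by omega)

private lemma aux_t {Q : ℕ} {F : Type*} [Field F] [Fintype F]
    (hF : Fintype.card F = Q ^ 2) (hQ : Q % 6 = 5) :
    ∃ t : F, t ^ (Q + 1) = 1 ∧ t ≠ 1 ∧ t ≠ -1 := by
  obtain ⟨g, hord, hg⟩ := aux_gen' hF
  have hmul : (Q-1)*(Q+1) = Q^2 - 1 := by
    zify [aux_sq1' Q hQ, show 1 ≤ Q by omega]; ring
  refine ⟨((g : F)) ^ (Q - 1), ?_, ?_, ?_⟩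
  · rw [← pow_mul, hmul, ← hord]
    have : (g : F) ^ orderOf g = ((g ^ orderOf g : Fˣ) : F) := by push_cast; ring
    rw [this, pow_orderOf_eq_one]; simp
  · intro h
    have hu : g ^ (Q - 1) = 1 := by
      ext; push_cast; exact h
    have hdvd : Q^2 - 1 ∣ Q - 1 := hord ▸ orderOf_dvd_of_pow_eq_one hu
    have h1 := Nat.le_of_dvd (by omega) hdvd
    zify [aux_sq1' Q hQ, show 1 ≤ Q by omega] at h1
    have h5 : (5:ℤ) ≤ (Q:ℤ) := by exact_mod_cast (by omega : 5 ≤ Q)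
    nlinarith
  · intro h
    have hu : g ^ (2*(Q - 1)) = 1 := by
      ext
      push_cast
      rw [pow_mul, ← pow_mul]
      rw [mul_comm 2 (Q-1), pow_mul, h]
      norm_num
    have hdvd : Q^2 - 1 ∣ 2*(Q - 1) := hord ▸ orderOf_dvd_of_pow_eq_one hu
    have h1 := Nat.le_of_dvd (by omega) hdvd
    zify [aux_sq1' Q hQ, show 1 ≤ Q by omega] at h1
    have h5 : (5:ℤ) ≤ (Q:ℤ) := by exact_mod_cast (by omega : 5 ≤ Q)
    nlinarith
private lemma aux_normsurj {Q : ℕ} {F : Type*} [Field F] [Fintype F]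
    (hF : Fintype.card F = Q ^ 2) (hQ : Q % 6 = 5) :
    ∀ c : F, c ^ Q = c → ∃ x : F, x ^ (Q + 1) = c := by
  obtain ⟨g, hord, hg⟩ := aux_gen' hF
  intro c hc
  rcases eq_or_ne c 0 with rfl | hc0
  · exact ⟨0, by simp⟩
  · set cu : Fˣ := Units.mk0 c hc0 with hcu
    obtain ⟨k, hk⟩ := hg cu
    simp only at hk
    have hc1 : cu ^ (Q - 1) = 1 := by
      have : c ^ (Q - 1) * c = c := by
        rw [← pow_succ]
        have : Q - 1 + 1 = Q := by omega
        rw [this, hc]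
      have hcQ1 : c ^ (Q - 1) = 1 := by
        field_simp at this; exact this
      ext
      push_cast
      exact hcQ1
    have hzpow : g ^ (k * (Q - 1 : ℕ)) = 1 := by
      rw [zpow_mul, hk]
      exact_mod_cast hc1
    have hdvd : ((Q ^ 2 - 1 : ℕ) : ℤ) ∣ k * (Q - 1 : ℕ) := by
      rw [← hord]
      exact orderOf_dvd_iff_zpow_eq_one.mpr hzpow
    have hcast1 : ((Q ^ 2 - 1 : ℕ) : ℤ) = ((Q:ℤ) + 1) * ((Q - 1 : ℕ) : ℤ) := by
      have h5 : 5 ≤ Q := by omega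
      have : ((Q ^ 2 - 1 : ℕ) : ℤ) = (Q:ℤ)^2 - 1 := by
        push_cast [Nat.cast_sub (by nlinarith : 1 ≤ Q ^ 2)]; ring
      rw [this]
      have : ((Q - 1 : ℕ) : ℤ) = (Q:ℤ) - 1 := by push_cast [Nat.cast_sub (by omega : 1 ≤ Q)]; ring
      rw [this]; ring
    have hdvd2 : ((Q:ℤ) + 1) ∣ k := by
      obtain ⟨d, hd⟩ := hdvd
      rw [hcast1] at hd
      refine ⟨d, ?_⟩
      have hne : ((Q - 1 : ℕ) : ℤ) ≠ 0 := by
        have : Q - 1 ≠ 0 := by omega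
        exact_mod_cast this
      have : k * ((Q - 1 : ℕ) : ℤ) = (((Q:ℤ) + 1) * d) * ((Q - 1 : ℕ) : ℤ) := by
        rw [hd]; ring
      exact mul_right_cancel₀ hne this
    obtain ⟨d, hdd⟩ := hdvd2
    refine ⟨((g ^ d : Fˣ) : F), ?_⟩
    have : (g ^ d) ^ (Q + 1 : ℕ) = cu := by
      rw [← zpow_natCast (g ^ d), ← zpow_mul, ← hk, hdd]
      congr 1
      push_cast
      ring
    calc ((g ^ d : Fˣ) : F) ^ (Q + 1) = (((g ^ d) ^ (Q + 1 : ℕ) : Fˣ) : F) := by push_cast; ring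
    _ = c := by rw [this]; simp [hcu]

private lemma aux_ordone {Q : ℕ} {F : Type*} [Field F] (hQ : Q % 6 = 5)
    (ω : F) (h3 : ω ^ 3 = 1) (hq : ω ^ (Q - 1) = 1) : ω = 1 := by
  have d3 : orderOf ω ∣ 3 := orderOf_dvd_of_pow_eq_one h3
  have dq : orderOf ω ∣ Q - 1 := orderOf_dvd_of_pow_eq_one hq
  have hgcd : Nat.gcd 3 (Q - 1) = 1 := by
    rw [Nat.gcd_rec 3 (Q-1), show (Q-1) % 3 = 1 by omega, Nat.gcd_one_left]
  have : orderOf ω ∣ 1 := hgcd ▸ Nat.dvd_gcd d3 dq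
  rw [← orderOf_eq_one_iff]
  exact Nat.eq_one_of_dvd_one this

private lemma aux_cubeinj {Q : ℕ} {F : Type*} [Field F] (hQ : Q % 6 = 5)
    (w₁ w₂ : F) (h1 : w₁ ^ Q = w₁) (h2 : w₂ ^ Q = w₂) (h : w₁ ^ 3 = w₂ ^ 3) :
    w₁ = w₂ := by
  rcases eq_or_ne w₂ 0 with rfl | hw2
  · rw [zero_pow (by norm_num), pow_eq_zero_iff (by norm_num : (3:ℕ) ≠ 0)] at h
    exact h
  · have hw1 : w₁ ≠ 0 := by
      intro h0
      rw [h0, zero_pow (by norm_num)] at h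
      exact hw2 (by rwa [eq_comm, pow_eq_zero_iff (by norm_num : (3:ℕ) ≠ 0)] at h)
    set ω := w₁ / w₂ with hω
    have hω3 : ω ^ 3 = 1 := by rw [hω, div_pow, h, div_self (pow_ne_zero 3 hw2)]
    have hωQ : ω ^ Q = ω := by rw [hω, div_pow, h1, h2]
    have hωne : ω ≠ 0 := div_ne_zero hw1 hw2
    have hωq : ω ^ (Q - 1) = 1 := by
      have : ω ^ (Q - 1) * ω = ω := by
        rw [← pow_succ, show Q - 1 + 1 = Q by omega, hωQ]
      field_simp at this
      exact this
    have := aux_ordone hQ ω hω3 hωq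
    rw [hω, div_eq_one_iff_eq hw2] at this
    exact this

private lemma aux_delta {Q : ℕ} {F : Type*} [Field F] [Fintype F]
    (hF : Fintype.card F = Q ^ 2) (hQ : Q % 6 = 5) :
    ∃ δ : F, δ ^ 2 = -3 ∧ δ ^ Q = -δ ∧ δ ≠ 0 := by
  obtain ⟨haddQ, h2, h3⟩ := aux_basic hF hQ
  have h2Q : (2:F) ^ Q = 2 := by
    rw [show (2:F) = 1 + 1 by norm_num, haddQ, one_pow]
  have h3Q : (3:F) ^ Q = 3 := by
    rw [show (3:F) = 1 + 1 + 1 by norm_num, haddQ, haddQ, one_pow]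
  have hsubQ : ∀ x y : F, (x - y) ^ Q = x ^ Q - y ^ Q := by
    intro x y
    have h := haddQ (x - y) y
    rw [sub_add_cancel] at h
    linear_combination -h
  have hodd : Odd Q := Nat.odd_iff.mpr (by omega)
  have hneg3Q : (-3:F) ^ Q = -3 := by rw [hodd.neg_pow, h3Q]
  obtain ⟨x, hx⟩ := aux_normsurj hF hQ (-3) hneg3Q
  obtain ⟨δ, hδ⟩ : ∃ δ : F, δ = x ^ ((Q+1)/2) := ⟨_, rfl⟩
  have hδ2 : δ ^ 2 = -3 := by
    rw [hδ, ← pow_mul, show (Q+1)/2*2 = Q+1 by omega, hx]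
  have hδ0 : δ ≠ 0 := by
    intro h0
    rw [h0] at hδ2
    apply h3
    linear_combination hδ2
  have hδQ2 : (δ ^ Q) ^ 2 = -3 := by
    rw [← pow_mul, mul_comm, pow_mul, hδ2, hneg3Q]
  have hfac : (δ ^ Q - δ) * (δ ^ Q + δ) = 0 := by
    linear_combination hδQ2 - hδ2
  rcases mul_eq_zero.mp hfac with hcase | hcase
  · exfalso
    have hδδ : δ ^ Q = δ := sub_eq_zero.mp hcase
    obtain ⟨ω, hω⟩ : ∃ ω : F, ω = (δ - 1) / 2 := ⟨_, rfl⟩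
    have hq : ω ^ 2 + ω + 1 = 0 := by
      rw [hω]
      field_simp
      linear_combination hδ2
    have hω3 : ω ^ 3 = 1 := by linear_combination (ω - 1) * hq
    have hωQ : ω ^ Q = ω := by
      rw [hω, div_pow, hsubQ, one_pow, h2Q, hδδ]
    have hωne : ω ≠ 0 := by
      intro h0
      rw [h0] at hq
      simp at hq
    have hωq1 : ω ^ (Q - 1) = 1 := by
      have h := hωQ
      rw [show Q = Q - 1 + 1 by omega, pow_succ] at h
      field_simp at h
      exact h
    have := aux_ordone hQ ω hω3 hωq1
    rw [this] at hq
    apply h3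
    linear_combination hq
  · exact ⟨δ, hδ2, eq_neg_of_add_eq_zero_left hcase, hδ0⟩

private lemma aux_solve {Q : ℕ} {F : Type*} [Field F] [Fintype F]
    (hF : Fintype.card F = Q ^ 2) (hQ : Q % 6 = 5) (P : F) (hP : P ^ Q = P) (hP0 : P ≠ 0) :
    ∃ u v : F, u ^ Q = u ∧ v ^ Q = v ∧ u ≠ v ∧ u^2 + u*v + v^2 + P = 0 := by
  obtain ⟨haddQ, h2, h3⟩ := aux_basic hF hQ
  have h2Q : (2:F) ^ Q = 2 := by
    rw [show (2:F) = 1 + 1 by norm_num, haddQ, one_pow]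
  have hsubQ : ∀ x y : F, (x - y) ^ Q = x ^ Q - y ^ Q := by
    intro x y
    have h := haddQ (x - y) y
    rw [sub_add_cancel] at h
    linear_combination -h
  have hodd : Odd Q := Nat.odd_iff.mpr (by omega)
  have hcard : ∀ z : F, z ^ (Q^2) = z := by
    intro z; rw [← hF]; exact FiniteField.pow_card z
  have hzz : ∀ z : F, (z ^ Q) ^ Q = z := by
    intro z; rw [← pow_mul, ← pow_two, hcard]
  obtain ⟨δ, hδ2, hδQ, hδ0⟩ := aux_delta hF hQ
  have h4 : (4:F) ≠ 0 := by
    intro h; apply h2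
    have : (2:F)*2 = 0 := by linear_combination h
    rcases mul_eq_zero.mp this with h' | h' <;> exact h'
  have hc : (-4*P) ^ Q = -4*P := by
    rw [mul_pow, hP]
    congr 1
    rw [hodd.neg_pow, show (4:F) = 2*2 by norm_num, mul_pow, h2Q]
  have hcne : (-4*P : F) ≠ 0 := by
    intro h
    apply hP0
    have h4' : (-4 : F) ≠ 0 := by intro h'; apply h4; linear_combination -h'
    rcases mul_eq_zero.mp h with h' | h'
    · exact absurd h' h4'
    · exact h'
  obtain ⟨x, hx⟩ := aux_normsurj hF hQ (-4*P) hc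
  have hdecomp : ∀ z : F, z ^ (Q+1) = -4*P →
      ∃ U V : F, U ^ Q = U ∧ V ^ Q = V ∧ z = U + δ*V ∧ U^2 + 3*V^2 = -4*P := by
    intro z hz
    refine ⟨(z + z^Q)/2, (z - z^Q)/(2*δ), ?_, ?_, ?_, ?_⟩
    · rw [div_pow, haddQ, h2Q, hzz]
      ring
    · rw [div_pow, hsubQ, hzz, mul_pow, h2Q, hδQ]
      rw [mul_neg, div_neg, neg_div', neg_sub]
    · field_simp
      ring
    · have key : ((z + z^Q)/2)^2 + 3*((z - z^Q)/(2*δ))^2 = z^Q * z := by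
        field_simp
        linear_combination (z - z^Q)^2 * hδ2
      rw [key, ← pow_succ]
      exact hz
  have hfinish : ∀ U V : F, U ^ Q = U → V ^ Q = V → U ≠ 3*V → U^2 + 3*V^2 = -4*P →
      ∃ u v : F, u ^ Q = u ∧ v ^ Q = v ∧ u ≠ v ∧ u^2 + u*v + v^2 + P = 0 := by
    intro U V hU hV hUV hnorm
    refine ⟨(U - V)/2, V, ?_, hV, ?_, ?_⟩
    · rw [div_pow, hsubQ, hU, hV, h2Q]
    · intro h
      apply hUV
      field_simp at h
      linear_combination h
    · field_simp
      linear_combination hnorm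
  obtain ⟨U, V, hU, hV, hxUV, hnorm⟩ := hdecomp x hx
  by_cases hU3V : U ≠ 3*V
  · exact hfinish U V hU hV hU3V hnorm
  · push_neg at hU3V
    obtain ⟨t, ht1, htne1, htnem1⟩ := aux_t hF hQ
    have ht0 : t ≠ 0 := by
      intro h; rw [h] at ht1; simp [zero_pow] at ht1
    have hxt : (x*t) ^ (Q+1) = -4*P := by rw [mul_pow, ht1, mul_one, hx]
    obtain ⟨U', V', hU', hV', hxUV', hnorm'⟩ := hdecomp (x*t) hxt
    by_cases hU3V' : U' ≠ 3*V'
    · exact hfinish U' V' hU' hV' hU3V' hnorm'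
    · exfalso
      push_neg at hU3V'
      have h3δ : (3:F) + δ ≠ 0 := by
        intro h
        have hδ3 : δ = -3 := by linear_combination h
        rw [hδ3] at hδ2
        have : (12:F) = 0 := by linear_combination hδ2
        apply h3
        have h12 : (2:F)*(2*3) = 0 := by linear_combination this
        rcases mul_eq_zero.mp h12 with h' | h'
        · exact absurd h' h2
        · rcases mul_eq_zero.mp h' with h'' | h''
          · exact absurd h'' h2
          · exact h''
      have hx0 : x ≠ 0 := by
        intro h0
        rw [h0, zero_pow (by omega : Q + 1 ≠ 0)] at hx
        exact hcne hx.symm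
      have hVne : V ≠ 0 := by
        intro h0
        rw [hU3V, h0] at hxUV
        simp at hxUV
        exact hx0 hxUV
      have hteq : t = V'/V := by
        have hxform : x = (3 + δ)*V := by rw [hxUV, hU3V]; ring
        have hxform' : x*t = (3 + δ)*V' := by rw [hxUV', hU3V']; ring
        rw [hxform] at hxform'
        have hVt : V * t = V' := by
          apply mul_left_cancel₀ h3δ
          linear_combination hxform'
        rw [← hVt]
        field_simp
      have htQ : t ^ Q = t := by rw [hteq, div_pow, hV', hV]
      have ht2 : t * t = 1 := by
        nth_rewrite 1 [← htQ]
        rw [← pow_succ]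
        exact ht1
      have hfac2 : (t - 1)*(t + 1) = 0 := by linear_combination ht2
      rcases mul_eq_zero.mp hfac2 with h' | h'
      · exact htne1 (by linear_combination h')
      · exact htnem1 (by linear_combination h')

private lemma aux_ord6 {F : Type*} [Field F] (h2 : (2:F) ≠ 0) (h3 : (3:F) ≠ 0) (β : F) :
    orderOf β = 6 ↔ β^2 - β + 1 = 0 := by
  constructor
  · intro h
    have h6 : β ^ 6 = 1 := h ▸ pow_orderOf_eq_one β
    have hfac : (β^3 - 1)*(β^3 + 1) = 0 := by linear_combination h6
    have hβ3 : β^3 + 1 = 0 := by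
      rcases mul_eq_zero.mp hfac with h' | h'
      · exfalso
        have : orderOf β ∣ 3 := orderOf_dvd_of_pow_eq_one (by linear_combination h')
        rw [h] at this
        omega
      · exact h'
    have hβne : β ≠ -1 := by
      intro h'
      have : orderOf β ∣ 2 := orderOf_dvd_of_pow_eq_one (by rw [h']; norm_num)
      rw [h] at this
      omega
    have hfac2 : (β + 1)*(β^2 - β + 1) = 0 := by linear_combination hβ3
    rcases mul_eq_zero.mp hfac2 with h' | h'
    · exact absurd (by linear_combination h' : β = -1) hβne
    · exact h'
  · intro hquad
    have h6 : β ^ 6 = 1 := by linear_combination (β^4 + β^3 - β - 1) * hquad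
    have hdvd : orderOf β ∣ 6 := orderOf_dvd_of_pow_eq_one h6
    have hdle : orderOf β ≤ 6 := Nat.le_of_dvd (by norm_num) hdvd
    have hdpos : 0 < orderOf β := Nat.pos_of_dvd_of_pos hdvd (by norm_num)
    have hne1 : orderOf β ≠ 1 := by
      intro h'
      have : β = 1 := orderOf_eq_one_iff.mp h'
      rw [this] at hquad
      norm_num at hquad
    have hne2 : orderOf β ≠ 2 := by
      intro h'
      have hb2 : β ^ 2 = 1 := h' ▸ pow_orderOf_eq_one β
      exact h3 (by linear_combination (2 + β)*hquad - (1 + β)*hb2)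
    have hne3 : orderOf β ≠ 3 := by
      intro h'
      have hb3 : β ^ 3 = 1 := h' ▸ pow_orderOf_eq_one β
      exact h2 (by linear_combination (β + 1)*hquad - hb3)
    set d := orderOf β with hd
    interval_cases d <;> first | rfl | (exact absurd hdvd (by decide)) | simp_all

theorem stmt_11 (Q : ℕ) (F : Type*) [Field F] [Fintype F]
    (hF : Fintype.card F = Q ^ 2) (hQ : Q % 6 = 5) (α : F) (hα : α ≠ 0) :
    Function.Bijective (fun x : F => x ^ (Q + 2) + α * x) ↔ orderOf (α ^ (Q - 1)) = 6 := by
  obtain ⟨haddQ, h2, h3⟩ := aux_basic hF hQ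
  have h2Q : (2:F) ^ Q = 2 := by
    rw [show (2:F) = 1 + 1 by norm_num, haddQ, one_pow]
  have h3Q : (3:F) ^ Q = 3 := by
    rw [show (3:F) = 1 + 1 + 1 by norm_num, haddQ, haddQ, one_pow]
  have hodd : Odd Q := Nat.odd_iff.mpr (by omega)
  have hcard : ∀ z : F, z ^ (Q^2) = z := by
    intro z; rw [← hF]; exact FiniteField.pow_card z
  have hzz : ∀ z : F, (z ^ Q) ^ Q = z := by
    intro z; rw [← pow_mul, ← pow_two, hcard]
  have hKG : ∀ z : F, (z ^ (Q+1)) ^ Q = z ^ (Q+1) := by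
    intro z
    rw [← pow_mul, show (Q+1)*Q = Q^2 + Q by ring, pow_add, hcard, ← pow_succ']
  set β := α ^ (Q-1) with hβdef
  have hβα : α ^ Q = β * α := by
    rw [hβdef, ← pow_succ, show Q - 1 + 1 = Q by omega]
  obtain ⟨a, ha⟩ : ∃ a : F, a = α + α^Q := ⟨_, rfl⟩
  obtain ⟨b, hb⟩ : ∃ b : F, b = α^(Q+1) := ⟨_, rfl⟩
  have haK : a ^ Q = a := by rw [ha, haddQ, hzz, add_comm]
  have hbK : b ^ Q = b := by rw [hb]; exact hKG α
  have hbβ : b = β * α^2 := by rw [hb, pow_succ, hβα]; ring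
  have haβ : a = α + β * α := by rw [ha, hβα]
  have hab : a^2 - 3*b = α^2 * (β^2 - β + 1) := by rw [haβ, hbβ]; ring
  have hN : ∀ z : F, (z^(Q+2) + α*z)^(Q+1)
      = (z^(Q+1))^3 + a*(z^(Q+1))^2 + b*(z^(Q+1)) := by
    intro z
    have e1 : z^(Q+2) + α*z = (z^(Q+1) + α)*z := by
      rw [show Q+2 = (Q+1)+1 by omega, pow_succ]; ring
    have e2 : (z^(Q+1) + α)^(Q+1) = (z^(Q+1) + α^Q) * (z^(Q+1) + α) := by
      rw [pow_succ, haddQ, hKG]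
    rw [e1, mul_pow, e2, ha, hb, pow_succ]
    ring
  constructor
  · -- bijective → order 6
    intro hbij
    have hsuff : β^2 - β + 1 = 0 → orderOf β = 6 := (aux_ord6 h2 h3 β).mpr
    apply hsuff
    by_contra hne
    obtain ⟨c, hc3⟩ : ∃ c : F, a = 3*c := ⟨a/3, by field_simp⟩
    obtain ⟨P, hPdef⟩ : ∃ P : F, P = b - 3*c^2 := ⟨_, rfl⟩
    have hcK : c ^ Q = c := by
      apply mul_left_cancel₀ h3
      have : (3*c)^Q = 3*c := hc3 ▸ haK
      rw [mul_pow, h3Q] at this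
      rw [this]
    have hPK : P ^ Q = P := by
      have hs : (b - 3*c^2)^Q = b^Q - (3*c^2)^Q := by
        have h := haddQ (b - 3*c^2) (3*c^2)
        rw [sub_add_cancel] at h
        linear_combination -h
      rw [hPdef, hs, hbK, mul_pow, h3Q, ← pow_mul, mul_comm 2 Q, pow_mul, hcK]
    have hPne : P ≠ 0 := by
      intro h0
      apply hne
      have hab0 : a^2 - 3*b = 0 := by
        rw [hc3, hPdef] at *
        linear_combination -3*h0
      rw [hab] at hab0
      rcases mul_eq_zero.mp hab0 with h' | h'
      · exact absurd h' (pow_ne_zero 2 hα)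
      · exact h'
    obtain ⟨u, v, huK, hvK, huv, hsum⟩ := aux_solve hF hQ P hPK hPne
    obtain ⟨s, hs⟩ : ∃ s : F, s = u - c := ⟨_, rfl⟩
    obtain ⟨t, ht⟩ : ∃ t : F, t = v - c := ⟨_, rfl⟩
    have hsK : s ^ Q = s := by
      have h := haddQ s c
      rw [hs, sub_add_cancel] at h
      rw [hs]
      linear_combination huK - h - hcK
    have htK : t ^ Q = t := by
      have h := haddQ t c
      rw [ht, sub_add_cancel] at h
      rw [ht]
      linear_combination hvK - h - hcK
    have hst : s ≠ t := by
      rw [hs, ht]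
      intro h
      exact huv (by linear_combination h)
    have hGst : s^3 + a*s^2 + b*s = t^3 + a*t^2 + b*t := by
      have hsum' : u^2 + u*v + v^2 + (b - 3*c^2) = 0 := by rw [← hPdef]; exact hsum
      rw [hs, ht, hc3]
      linear_combination (u - v) * hsum'
    -- surjectivity of G on K gives injectivity, contradiction
    have hmaps : Set.MapsTo (fun z : F => z^3 + a*z^2 + b*z) {z : F | z^Q = z} {z : F | z^Q = z} := by
      intro z hz
      simp only [Set.mem_setOf_eq] at hz ⊢
      rw [haddQ, haddQ, mul_pow, mul_pow, haK, hbK, ← pow_mul, mul_comm 3 Q, pow_mul, hz,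
        ← pow_mul, mul_comm 2 Q, pow_mul, hz]
    have hsurj : Set.SurjOn (fun z : F => z^3 + a*z^2 + b*z) {z : F | z^Q = z} {z : F | z^Q = z} := by
      intro w hw
      simp only [Set.mem_setOf_eq] at hw
      obtain ⟨z0, hz0⟩ := aux_normsurj hF hQ w hw
      obtain ⟨x0, hx0⟩ := hbij.surjective z0
      have hx0' : x0^(Q+2) + α*x0 = z0 := hx0
      refine ⟨x0^(Q+1), ?_, ?_⟩
      · simp only [Set.mem_setOf_eq]
        exact hKG x0
      · simp only
        rw [← hN x0, hx0', hz0]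
    have hinj := ((Set.toFinite {z : F | z^Q = z}).surjOn_iff_bijOn_of_mapsTo hmaps).mp hsurj |>.injOn
    exact hst (hinj hsK htK hGst)
  · -- order 6 → bijective
    intro h6
    have hquad : β^2 - β + 1 = 0 := (aux_ord6 h2 h3 β).mp h6
    have hβ1 : β ≠ 1 := by
      intro h
      rw [h, orderOf_one] at h6
      omega
    have key : a^2 = 3*b := by
      have h0 : a^2 - 3*b = 0 := by rw [hab, hquad, mul_zero]
      linear_combination h0
    rw [← Finite.injective_iff_bijective]
    intro x y hxy
    have hxy' : x^(Q+2) + α*x = y^(Q+2) + α*y := hxy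
    have hz0 : ∀ z : F, z^(Q+2) + α*z = 0 → z = 0 := by
      intro z h
      by_contra hzne
      have e1 : (z^(Q+1) + α)*z = 0 := by
        rw [← h, show Q+2 = (Q+1)+1 by omega, pow_succ]; ring
      have hzα : z^(Q+1) = -α := by
        rcases mul_eq_zero.mp e1 with h' | h'
        · linear_combination h'
        · exact absurd h' hzne
      have hαQ : α^Q = α := by
        have h1 : (-α)^Q = -α := by rw [← hzα, hKG]
        rw [hodd.neg_pow] at h1
        exact neg_inj.mp h1
      apply hβ1
      apply mul_right_cancel₀ hα
      rw [← hβα, hαQ, one_mul]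
    rcases eq_or_ne x 0 with rfl | hx0
    · have : y^(Q+2) + α*y = 0 := by
        rw [← hxy']
        simp [zero_pow]
      exact (hz0 y this).symm
    rcases eq_or_ne y 0 with rfl | hy0
    · have : x^(Q+2) + α*x = 0 := by
        rw [hxy']
        simp [zero_pow]
      exact hz0 x this
    have hGst : (x^(Q+1))^3 + a*(x^(Q+1))^2 + b*(x^(Q+1))
        = (y^(Q+1))^3 + a*(y^(Q+1))^2 + b*(y^(Q+1)) := by
      rw [← hN x, ← hN y, hxy']
    have hcube : (3*x^(Q+1) + a)^3 = (3*y^(Q+1) + a)^3 := by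
      linear_combination 27*hGst + 9*(x^(Q+1) - y^(Q+1))*key
    have hKs : (3*x^(Q+1) + a)^Q = 3*x^(Q+1) + a := by
      rw [haddQ, mul_pow, h3Q, hKG, haK]
    have hKt : (3*y^(Q+1) + a)^Q = 3*y^(Q+1) + a := by
      rw [haddQ, mul_pow, h3Q, hKG, haK]
    have h3eq := aux_cubeinj hQ _ _ hKs hKt hcube
    have hseq : x^(Q+1) = y^(Q+1) := by
      apply mul_left_cancel₀ h3
      linear_combination h3eq
    have hsα : x^(Q+1) + α ≠ 0 := by
      intro h0
      apply hx0
      apply hz0 x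
      rw [show Q+2 = (Q+1)+1 by omega, pow_succ]
      linear_combination x * h0
    apply mul_left_cancel₀ hsα
    calc (x^(Q+1)+α)*x = x^(Q+2)+α*x := by
          rw [show Q+2 = (Q+1)+1 by omega, pow_succ]; ring
    _ = y^(Q+2)+α*y := hxy'
    _ = (y^(Q+1)+α)*y := by rw [show Q+2 = (Q+1)+1 by omega, pow_succ]; ring
    _ = (x^(Q+1)+α)*y := by rw [hseq]
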